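/- arXiv:1807.11437 — 2 statements merged into one kernel-verified Lean document; each statement's English description precedes it below -/
import Mathlib

section
/- Every symmetric polynomial evaluated at the Jucys–Murphy elements J_2, ..., J_n lies in the center of the group algebra ℚ[S_n]. In particular, each elementary symmetric polynomial σ_k(J_2, ..., J_n) is central in ℚ[S_n]. -/
open Equiv Finset

/-- The `k`-th Jucys–Murphy element `J_k = Σ_{i<k} (i k)` in `ℚ[S_n]`. -/
noncomputable def jucysMurphy (n : ℕ) (k : Fin n) : MonoidAlgebra ℚ (Equiv.Perm (Fin n)) :=
  ∑ i ∈ Finset.Iio k, MonoidAlgebra.single (Equiv.swap i k) 1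

/-- Evaluation of a multivariate polynomial at the (pairwise commuting) Jucys–Murphy
elements, multiplying the factors of each monomial in the fixed order of the indices. -/
noncomputable def evalJM (n : ℕ) (p : MvPolynomial (Fin n) ℚ) :
    MonoidAlgebra ℚ (Equiv.Perm (Fin n)) :=
  ∑ d ∈ p.support, p.coeff d • ((List.finRange n).map fun i => jucysMurphy n i ^ d i).prod

namespace JMaux
variable {n : ℕ}

noncomputable def sg (g : Equiv.Perm (Fin n)) : MonoidAlgebra ℚ (Equiv.Perm (Fin n)) :=
  MonoidAlgebra.single g 1

lemma sg_mul (g h : Equiv.Perm (Fin n)) : sg g * sg h = sg (g * h) := by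
  simp [sg, MonoidAlgebra.single_mul_single]

lemma sg_one : sg (1 : Equiv.Perm (Fin n)) = 1 := rfl

lemma jm_def (k : Fin n) : jucysMurphy n k = ∑ i ∈ Finset.Iio k, sg (Equiv.swap i k) := rfl

lemma swap_lt {u v j x : Fin n} (hu : u < j) (hv : v < j) (hx : x < j) :
    Equiv.swap u v x < j := by
  rcases eq_or_ne x u with rfl | hxu
  · rwa [Equiv.swap_apply_left]
  rcases eq_or_ne x v with rfl | hxv
  · rwa [Equiv.swap_apply_right]
  · rwa [Equiv.swap_apply_of_ne_of_ne hxu hxv]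

lemma commute_swap_jm_of_lt {u v j : Fin n} (hu : u < j) (hv : v < j) :
    sg (Equiv.swap u v) * jucysMurphy n j = jucysMurphy n j * sg (Equiv.swap u v) := by
  rw [jm_def, Finset.mul_sum, Finset.sum_mul]
  have key : ∀ x ∈ Finset.Iio j, sg (Equiv.swap u v) * sg (Equiv.swap x j)
      = sg (Equiv.swap (Equiv.swap u v x) j) * sg (Equiv.swap u v) := by
    intro x _
    rw [sg_mul, sg_mul]
    congr 1
    have hj : Equiv.swap u v j = j := Equiv.swap_apply_of_ne_of_ne hu.ne' hv.ne'
    conv_rhs => rw [← hj]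
    exact Equiv.mul_swap_eq_swap_mul (Equiv.swap u v) x j
  rw [Finset.sum_congr rfl key]
  refine Finset.sum_nbij' (fun x => Equiv.swap u v x) (fun x => Equiv.swap u v x)
    ?_ ?_ ?_ ?_ ?_
  · intro a ha; simp only [Finset.mem_Iio] at *; exact swap_lt hu hv ha
  · intro a ha; simp only [Finset.mem_Iio] at *; exact swap_lt hu hv ha
  · intro a _; simp
  · intro a _; simp
  · intro a _; rfl

lemma commute_swap_jm_of_gt {u v j : Fin n} (hu : j < u) (hv : j < v) :
    sg (Equiv.swap u v) * jucysMurphy n j = jucysMurphy n j * sg (Equiv.swap u v) := by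
  rw [jm_def, Finset.mul_sum, Finset.sum_mul]
  refine Finset.sum_congr rfl fun x hx => ?_
  simp only [Finset.mem_Iio] at hx
  rw [sg_mul, sg_mul]
  congr 1
  have hx' : Equiv.swap u v x = x :=
    Equiv.swap_apply_of_ne_of_ne (hx.trans hu).ne (hx.trans hv).ne
  have hj : Equiv.swap u v j = j := Equiv.swap_apply_of_ne_of_ne hu.ne hv.ne
  have := Equiv.mul_swap_eq_swap_mul (Equiv.swap u v) x j
  rw [hx', hj] at this
  exact this

lemma jm_commute (j m : Fin n) :
    Commute (jucysMurphy n j) (jucysMurphy n m) := by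
  wlog h : j < m generalizing j m
  · rcases eq_or_lt_of_le (not_lt.mp h) with h' | h'
    · subst h'; exact Commute.refl _
    · exact (this m j h').symm
  · rw [jm_def j]
    refine Commute.sum_left _ _ _ fun x hx => ?_
    simp only [Finset.mem_Iio] at hx
    exact commute_swap_jm_of_lt (hx.trans h) h


section adjacent
variable {k k' : Fin n} (hlt : k < k') (hsucc : (k' : ℕ) = (k : ℕ) + 1)

lemma Iio_eq (hsucc : (k' : ℕ) = (k : ℕ) + 1) :
    Finset.Iio k' = insert k (Finset.Iio k) := by
  ext x
  simp only [Finset.mem_Iio, Finset.mem_insert, Fin.lt_def, Fin.ext_iff]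
  omega

include hsucc in
lemma jm_k'_eq : jucysMurphy n k' =
    sg (Equiv.swap k k') + ∑ i ∈ Finset.Iio k, sg (Equiv.swap i k') := by
  rw [jm_def, Iio_eq hsucc, Finset.sum_insert (by simp)]

lemma s_mul_s : sg (Equiv.swap k k') * sg (Equiv.swap k k') = 1 := by
  rw [sg_mul, Equiv.swap_mul_self, sg_one]

include hlt hsucc in
lemma R1 : sg (Equiv.swap k k') * jucysMurphy n k' =
    jucysMurphy n k * sg (Equiv.swap k k') + 1 := by
  rw [jm_k'_eq hsucc, mul_add, s_mul_s, jm_def, Finset.mul_sum, Finset.sum_mul]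
  rw [add_comm]
  congr 1
  refine Finset.sum_congr rfl fun x hx => ?_
  simp only [Finset.mem_Iio] at hx
  rw [sg_mul, sg_mul]
  congr 1
  have hx' : Equiv.swap k k' x = x :=
    Equiv.swap_apply_of_ne_of_ne hx.ne (hx.trans hlt).ne
  have := Equiv.mul_swap_eq_swap_mul (Equiv.swap k k') x k'
  rw [hx', Equiv.swap_apply_right] at this
  exact this

include hlt hsucc in
lemma R2 : sg (Equiv.swap k k') * jucysMurphy n k =
    jucysMurphy n k' * sg (Equiv.swap k k') - 1 := by
  have hB : ∀ x ∈ Finset.Iio k, sg (Equiv.swap k k') * sg (Equiv.swap x k)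
      = sg (Equiv.swap x k') * sg (Equiv.swap k k') := by
    intro x hx
    simp only [Finset.mem_Iio] at hx
    rw [sg_mul, sg_mul]
    congr 1
    have hx' : Equiv.swap k k' x = x :=
      Equiv.swap_apply_of_ne_of_ne hx.ne (hx.trans hlt).ne
    have := Equiv.mul_swap_eq_swap_mul (Equiv.swap k k') x k
    rw [hx', Equiv.swap_apply_left] at this
    exact this
  rw [jm_def k, Finset.mul_sum, Finset.sum_congr rfl hB, ← Finset.sum_mul]
  have hJ : ∑ i ∈ Finset.Iio k, sg (Equiv.swap i k')
      = jucysMurphy n k' - sg (Equiv.swap k k') := by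
    rw [jm_k'_eq hsucc]; abel
  rw [hJ, sub_mul, s_mul_s]

end adjacent

section twovar
variable {R : Type*} [Ring R] (x y s : R)

/-- `h_a = Σ_{i+j=a-1} y^i x^j`. -/
noncomputable def hp (a : ℕ) : R := ∑ i ∈ Finset.range a, y ^ i * x ^ (a - 1 - i)

variable {x y s}

lemma commute_y_hp (hxy : Commute x y) (a : ℕ) : Commute y (hp x y a) :=
  Commute.sum_right _ _ _ fun i _ =>
    ((Commute.refl y).pow_right i).mul_right (hxy.symm.pow_right _)

lemma hp_succ (a : ℕ) : hp x y (a + 1) = hp x y a * x + y ^ a := by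
  rw [hp, Finset.sum_range_succ, hp, Finset.sum_mul]
  congr 1
  · refine Finset.sum_congr rfl fun i hi => ?_
    simp only [Finset.mem_range] at hi
    have h : a + 1 - 1 - i = (a - 1 - i) + 1 := by omega
    rw [h, pow_succ, mul_assoc]
  · simp

lemma hp_succ' (a : ℕ) : hp x y (a + 1) = y * hp x y a + x ^ a := by
  rw [hp, Finset.sum_range_succ', hp, Finset.mul_sum]
  congr 1
  · refine Finset.sum_congr rfl fun i _ => ?_
    have h : a + 1 - 1 - (i + 1) = a - 1 - i := by omega
    rw [h, pow_succ', mul_assoc]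
  · simp

lemma s_pow_x (hsx : s * x = y * s - 1) (a : ℕ) :
    s * x ^ a = y ^ a * s - hp x y a := by
  induction a with
  | zero => simp [hp]
  | succ a ih =>
    rw [pow_succ, ← mul_assoc, ih, sub_mul, mul_assoc, hsx, hp_succ]
    rw [mul_sub, ← mul_assoc, ← pow_succ, mul_one]
    abel

lemma s_pow_y (hxy : Commute x y) (hsy : s * y = x * s + 1) (a : ℕ) :
    s * y ^ a = x ^ a * s + hp x y a := by
  induction a with
  | zero => simp [hp]
  | succ a ih =>
    rw [pow_succ, ← mul_assoc, ih, add_mul, mul_assoc, hsy, hp_succ']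
    rw [mul_add, ← mul_assoc, ← pow_succ, mul_one, (commute_y_hp hxy a).eq]
    abel

lemma s_mul_xy (hxy : Commute x y) (hsx : s * x = y * s - 1) (hsy : s * y = x * s + 1)
    (a b : ℕ) :
    s * (x ^ a * y ^ b) =
      y ^ a * x ^ b * s + (y ^ a * hp x y b - hp x y a * y ^ b) := by
  rw [← mul_assoc, s_pow_x hsx, sub_mul, mul_assoc _ s, s_pow_y hxy hsy]
  rw [mul_add, ← mul_assoc]
  abel

end twovar

/-- ordered monomial in the JM elements -/
noncomputable def Md (n : ℕ) (d : Fin n →₀ ℕ) : MonoidAlgebra ℚ (Equiv.Perm (Fin n)) :=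
  ((List.finRange n).map fun j => jucysMurphy n j ^ d j).prod

noncomputable def restL (n : ℕ) (k k' : Fin n) : List (Fin n) :=
  ((List.finRange n).erase k).erase k'

noncomputable def Qd (n : ℕ) (k k' : Fin n) (d : Fin n →₀ ℕ) :
    MonoidAlgebra ℚ (Equiv.Perm (Fin n)) :=
  ((restL n k k').map fun j => jucysMurphy n j ^ d j).prod

noncomputable def sgm (k k' : Fin n) (d : Fin n →₀ ℕ) : Fin n →₀ ℕ :=
  Finsupp.equivMapDomain (Equiv.swap k k') d

lemma sgm_apply (k k' : Fin n) (d : Fin n →₀ ℕ) (j : Fin n) :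
    sgm k k' d j = d (Equiv.swap k k' j) := by
  rw [sgm, Finsupp.equivMapDomain_apply, Equiv.symm_swap]

lemma sgm_left (k k' : Fin n) (d : Fin n →₀ ℕ) : sgm k k' d k = d k' := by
  rw [sgm_apply, Equiv.swap_apply_left]

lemma sgm_right (k k' : Fin n) (d : Fin n →₀ ℕ) : sgm k k' d k' = d k := by
  rw [sgm_apply, Equiv.swap_apply_right]

lemma sgm_of_ne {k k' j : Fin n} (h1 : j ≠ k) (h2 : j ≠ k') (d : Fin n →₀ ℕ) :
    sgm k k' d j = d j := by
  rw [sgm_apply, Equiv.swap_apply_of_ne_of_ne h1 h2]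

lemma sgm_sgm (k k' : Fin n) (d : Fin n →₀ ℕ) : sgm k k' (sgm k k' d) = d := by
  ext j
  rw [sgm_apply, sgm_apply, Equiv.swap_apply_self]

lemma mem_restL {k k' j : Fin n} (h : j ∈ restL n k k') : j ≠ k ∧ j ≠ k' := by
  rw [restL, ((List.nodup_finRange n).erase k).mem_erase_iff] at h
  obtain ⟨h1, h2⟩ := h
  rw [(List.nodup_finRange n).mem_erase_iff] at h2
  exact ⟨h2.1, h1⟩

lemma perm_finRange {k k' : Fin n} (hkk' : k ≠ k') :
    List.Perm (List.finRange n) (k :: k' :: restL n k k') := by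
  have h1 : k ∈ List.finRange n := List.mem_finRange k
  have h2 : k' ∈ (List.finRange n).erase k := by
    rw [(List.nodup_finRange n).mem_erase_iff]
    exact ⟨hkk'.symm, List.mem_finRange k'⟩
  exact (List.perm_cons_erase h1).trans ((List.perm_cons_erase h2).cons k)

lemma pairwise_comm (l : List (Fin n)) (f : Fin n → ℕ) :
    (l.map fun j => jucysMurphy n j ^ f j).Pairwise Commute := by
  haveI : Std.Refl (α := MonoidAlgebra ℚ (Equiv.Perm (Fin n))) Commute := ⟨fun z => Commute.refl z⟩
  refine List.pairwise_of_reflexive_of_forall_ne ?_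
  intro a ha b hb _
  obtain ⟨j, _, rfl⟩ := List.mem_map.mp ha
  obtain ⟨m, _, rfl⟩ := List.mem_map.mp hb
  exact (jm_commute j m).pow_pow _ _

lemma Md_eq {k k' : Fin n} (hkk' : k ≠ k') (d : Fin n →₀ ℕ) :
    Md n d = jucysMurphy n k ^ d k * (jucysMurphy n k' ^ d k' * Qd n k k' d) := by
  have h := ((perm_finRange hkk').map fun j => jucysMurphy n j ^ d j).prod_eq'
    (pairwise_comm _ _)
  rw [Md, h, List.map_cons, List.map_cons, List.prod_cons, List.prod_cons, Qd]

lemma Qd_sgm {k k' : Fin n} (d : Fin n →₀ ℕ) :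
    Qd n k k' (sgm k k' d) = Qd n k k' d := by
  rw [Qd, Qd]
  congr 1
  refine List.map_congr_left fun j hj => ?_
  obtain ⟨h1, h2⟩ := mem_restL hj
  rw [sgm_of_ne h1 h2]

lemma coeff_sgm {k k' : Fin n} {p : MvPolynomial (Fin n) ℚ} (hsym : p.IsSymmetric)
    (d : Fin n →₀ ℕ) : p.coeff (sgm k k' d) = p.coeff d := by
  have h := MvPolynomial.coeff_rename_mapDomain (⇑(Equiv.swap k k'))
    (Equiv.injective _) p d
  rw [hsym (Equiv.swap k k')] at h
  rw [sgm, Finsupp.equivMapDomain_eq_mapDomain]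
  exact h

lemma mem_support_sgm {k k' : Fin n} {p : MvPolynomial (Fin n) ℚ} (hsym : p.IsSymmetric)
    {d : Fin n →₀ ℕ} (hd : d ∈ p.support) : sgm k k' d ∈ p.support := by
  rw [MvPolynomial.mem_support_iff] at hd ⊢
  rwa [coeff_sgm hsym]

lemma commute_s_evalJM {k k' : Fin n} (hlt : k < k') (hsucc : (k' : ℕ) = (k : ℕ) + 1)
    (p : MvPolynomial (Fin n) ℚ) (hsym : p.IsSymmetric) :
    sg (Equiv.swap k k') * evalJM n p = evalJM n p * sg (Equiv.swap k k') := by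
  set x := jucysMurphy n k with hxdef
  set y := jucysMurphy n k' with hydef
  set s := sg (Equiv.swap k k') with hsdef
  have hkk' : k ≠ k' := hlt.ne
  have hxy : Commute x y := jm_commute k k'
  have hsx : s * x = y * s - 1 := R2 hlt hsucc
  have hsy : s * y = x * s + 1 := R1 hlt hsucc
  have hsQ : ∀ d : Fin n →₀ ℕ, s * Qd n k k' d = Qd n k k' d * s := by
    intro d
    refine (Commute.list_prod_right _ _ fun z hz => ?_).eq
    obtain ⟨j, hj, rfl⟩ := List.mem_map.mp hz
    obtain ⟨hj1, hj2⟩ := mem_restL hj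
    have hcs : Commute s (jucysMurphy n j) := by
      rcases lt_or_gt_of_ne hj1 with h | h
      · have h1 := Fin.lt_def.mp h
        have h2 : j < k' := Fin.lt_def.mpr (by omega)
        exact commute_swap_jm_of_gt h h2
      · have h1 := Fin.lt_def.mp h
        have h3 : (j : ℕ) ≠ (k' : ℕ) := fun hh => hj2 (Fin.ext hh)
        have h2 : k' < j := Fin.lt_def.mpr (by omega)
        exact commute_swap_jm_of_lt h h2
    exact hcs.pow_right _
  have hstep : ∀ d : Fin n →₀ ℕ, s * Md n d
      = Md n (sgm k k' d) * s
        + (y ^ d k * hp x y (d k') - hp x y (d k) * y ^ d k') * Qd n k k' d := by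
    intro d
    rw [Md_eq hkk', ← mul_assoc (x ^ d k), ← mul_assoc s, s_mul_xy hxy hsx hsy]
    rw [add_mul, mul_assoc _ s _, hsQ d, ← mul_assoc]
    congr 2
    rw [Md_eq hkk' (sgm k k' d), sgm_left, sgm_right, Qd_sgm, ← mul_assoc,
      (hxy.pow_pow (d k') (d k)).eq]
  have hz : evalJM n p = ∑ d ∈ p.support, p.coeff d • Md n d := rfl
  rw [hz, Finset.mul_sum, Finset.sum_mul]
  have expand : ∀ d ∈ p.support, p.coeff d • (s * Md n d)
      = p.coeff d • (Md n (sgm k k' d) * s)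
        + p.coeff d • ((y ^ d k * hp x y (d k') - hp x y (d k) * y ^ d k') * Qd n k k' d) := by
    intro d _
    rw [hstep d, smul_add]
  calc ∑ d ∈ p.support, s * p.coeff d • Md n d
      = ∑ d ∈ p.support, p.coeff d • (Md n (sgm k k' d) * s)
        + ∑ d ∈ p.support, p.coeff d •
          ((y ^ d k * hp x y (d k') - hp x y (d k) * y ^ d k') * Qd n k k' d) := by
        rw [← Finset.sum_add_distrib]
        refine Finset.sum_congr rfl fun d hd => ?_
        rw [mul_smul_comm, expand d hd]
    _ = ∑ d ∈ p.support, p.coeff d • Md n d * s := by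
        have hT : ∑ d ∈ p.support, p.coeff d •
            ((y ^ d k * hp x y (d k') - hp x y (d k) * y ^ d k') * Qd n k k' d) = 0 := by
          set T := ∑ d ∈ p.support, p.coeff d •
            ((y ^ d k * hp x y (d k') - hp x y (d k) * y ^ d k') * Qd n k k' d) with hTdef
          have hneg : T = -T := by
            rw [hTdef]
            rw [← Finset.sum_neg_distrib]
            refine Finset.sum_nbij' (fun d => sgm k k' d) (fun d => sgm k k' d)
              (fun d hd => mem_support_sgm hsym hd)
              (fun d hd => mem_support_sgm hsym hd)
              (fun d _ => sgm_sgm k k' d) (fun d _ => sgm_sgm k k' d) ?_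
            intro d _
            rw [coeff_sgm hsym, sgm_left, sgm_right, Qd_sgm, ← smul_neg]
            congr 1
            rw [← neg_mul, neg_sub]
            congr 1
            rw [((commute_y_hp hxy (d k')).pow_left (d k)).eq,
              ← ((commute_y_hp hxy (d k)).pow_left (d k')).eq]
          have h2 : (2 : ℚ) • T = 0 := by
            rw [two_smul]
            nth_rewrite 2 [hneg]
            exact add_neg_cancel T
          have := smul_eq_zero.mp h2
          tauto
        rw [hT, add_zero]
        refine Finset.sum_nbij' (fun d => sgm k k' d) (fun d => sgm k k' d)
          (fun d hd => mem_support_sgm hsym hd)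
          (fun d hd => mem_support_sgm hsym hd)
          (fun d _ => sgm_sgm k k' d) (fun d _ => sgm_sgm k k' d) ?_
        intro d _
        rw [coeff_sgm hsym, smul_mul_assoc]

end JMaux

/-- Every symmetric polynomial evaluated at the Jucys–Murphy elements is central in
`ℚ[S_n]`; in particular each elementary symmetric polynomial of them is central. -/
theorem symmetric_poly_of_jucysMurphy_mem_center (n : ℕ) :
    (∀ p : MvPolynomial (Fin n) ℚ, p.IsSymmetric →
      evalJM n p ∈ Set.center (MonoidAlgebra ℚ (Equiv.Perm (Fin n)))) ∧
    (∀ k : ℕ, evalJM n (MvPolynomial.esymm (Fin n) ℚ k) ∈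
      Set.center (MonoidAlgebra ℚ (Equiv.Perm (Fin n)))) := by
  have main : ∀ p : MvPolynomial (Fin n) ℚ, p.IsSymmetric →
      evalJM n p ∈ Set.center (MonoidAlgebra ℚ (Equiv.Perm (Fin n))) := by
    intro p hsym
    rw [Semigroup.mem_center_iff]
    intro a
    have hg : ∀ g : Equiv.Perm (Fin n),
        JMaux.sg g * evalJM n p = evalJM n p * JMaux.sg g := by
      cases n with
      | zero =>
        intro g
        have hgg : g = 1 := Subsingleton.elim g 1
        rw [hgg, JMaux.sg_one, one_mul, mul_one]
      | succ m =>
        intro g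
        have hmem : g ∈ Submonoid.closure
            (Set.range fun i : Fin m => Equiv.swap i.castSucc i.succ) := by
          rw [Equiv.Perm.mclosure_swap_castSucc_succ]; trivial
        induction hmem using Submonoid.closure_induction with
        | mem w hw =>
          obtain ⟨i, rfl⟩ := hw
          exact JMaux.commute_s_evalJM (Fin.castSucc_lt_succ (i := i)) (by simp) p hsym
        | one => rw [JMaux.sg_one, one_mul, mul_one]
        | mul u v hu hv hu' hv' =>
          rw [← JMaux.sg_mul, mul_assoc, hv', ← mul_assoc, hu', mul_assoc]
    induction a using MonoidAlgebra.induction_on with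
    | of g => simpa [JMaux.sg, MonoidAlgebra.of_apply] using hg g
    | add f g hf hg' => rw [add_mul, mul_add, hf, hg']
    | smul r f hf => rw [smul_mul_assoc, mul_smul_comm, hf]
  exact ⟨main, fun k => main _ (MvPolynomial.esymm_isSymmetric _ _ k)⟩
end

section
/- (Jucys correspondence) For every k with 0 ≤ k ≤ n-1, the k-th elementary symmetric polynomial evaluated at the Jucys–Murphy elements satisfies σ_k(J_2, ..., J_n) = Σ_{μ ⊢ n, ℓ(μ) = n - k} C_μ in ℚ[S_n], where the sum is over partitions μ of n with exactly n - k parts. -/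
open Equiv Finset

section Aux

open Equiv.Perm

variable {α : Type*} [DecidableEq α] [Fintype α]

lemma jc_merge {c : Perm α} (hc : c.IsCycle) {a x : α}
    (ha : a ∈ c.support) (hx : x ∉ c.support) :
    (c * Equiv.swap a x).IsCycle ∧ (c * Equiv.swap a x).support = insert x c.support := by
  have hax : a ≠ x := fun h => hx (h ▸ ha)
  have hcx : c x = x := notMem_support.mp hx
  have hca : c a ≠ a := mem_support.mp ha
  set g := c * Equiv.swap a x with hg
  have hgapp : ∀ y, y ≠ a → y ≠ x → g y = c y := fun y h1 h2 => by
    simp [hg, Equiv.swap_apply_of_ne_of_ne h1 h2]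
  have hga : g a = x := by simp [hg, hcx]
  have hgx : g x = c a := by simp [hg]
  have hcax : c a ≠ x := fun h => hx (h ▸ apply_mem_support.mpr ha)
  have hsupp : g.support = insert x c.support := by
    ext y
    rcases eq_or_ne y x with rfl | hyx
    · simp [mem_support, hgx, hcax]
    rcases eq_or_ne y a with rfl | hya
    · simp [mem_support, hga, hax, Ne.symm hax, ha, hca]
    · simp [mem_support, hgapp y hya hyx, hyx]
  have key : ∀ i : ℕ, SameCycle g x ((c ^ i) a) := by
    intro i; induction i with
    | zero => exact Equiv.Perm.SameCycle.symm ⟨1, by simp [hga]⟩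
    | succ i ih =>
      have hy : (c ^ i) a ∈ c.support := pow_apply_mem_support.mpr ha
      have hyx' : (c ^ i) a ≠ x := fun h => hx (h ▸ hy)
      rcases eq_or_ne ((c ^ i) a) a with he | hne
      · have h2 : (c ^ (i + 1)) a = g x := by
          rw [pow_succ', Equiv.Perm.mul_apply, he, hgx]
        rw [h2]; exact ⟨1, by simp⟩
      · have h2 : (c ^ (i + 1)) a = g ((c ^ i) a) := by
          rw [pow_succ', Equiv.Perm.mul_apply, hgapp _ hne hyx']
        rw [h2]; exact ih.trans ⟨1, by simp⟩
  refine ⟨⟨x, by rw [hgx]; exact fun h => hcax h, fun y hy => ?_⟩, hsupp⟩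
  have : y ∈ g.support := mem_support.mpr hy
  rw [hsupp, Finset.mem_insert] at this
  rcases this with rfl | hyc
  · exact SameCycle.refl _ _
  · obtain ⟨i, hi⟩ := hc.exists_pow_eq (mem_support.mp ha) (mem_support.mp hyc)
    exact hi ▸ key i

lemma jc_card_cycleType_le (σ : Perm α) : Multiset.card σ.cycleType ≤ σ.support.card := by
  rw [← Equiv.Perm.sum_cycleType]
  have h : ∀ y ∈ σ.cycleType, 1 ≤ y := fun y hy =>
    le_trans (by norm_num) (two_le_of_mem_cycleType hy)
  simpa using Multiset.card_nsmul_le_sum h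

lemma jc_tc_mul_swap {σ : Perm α} {a x : α} (hx : σ x = x) (hax : a ≠ x) :
    (σ * Equiv.swap a x).support.card - Multiset.card (σ * Equiv.swap a x).cycleType
      = (σ.support.card - Multiset.card σ.cycleType) + 1 := by
  have hxs : x ∉ σ.support := notMem_support.mpr hx
  by_cases ha : σ a = a
  · have hd : Disjoint σ (Equiv.swap a x) := by
      intro y
      rcases eq_or_ne y a with rfl | h1
      · exact Or.inl ha
      rcases eq_or_ne y x with rfl | h2
      · exact Or.inl hx
      · exact Or.inr (Equiv.swap_apply_of_ne_of_ne h1 h2)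
    have hsupp : (σ * Equiv.swap a x).support = σ.support ∪ {a, x} := by
      rw [hd.support_mul, support_swap hax]
    have hdisjf : _root_.Disjoint σ.support ({a, x} : Finset α) := by
      simp only [Finset.disjoint_insert_right, Finset.disjoint_singleton_right]
      exact ⟨notMem_support.mpr ha, hxs⟩
    have hcard : (σ * Equiv.swap a x).support.card = σ.support.card + 2 := by
      rw [hsupp, Finset.card_union_of_disjoint hdisjf,
        Finset.card_insert_of_notMem (by simp [hax]), Finset.card_singleton]
    have hct : Multiset.card (σ * Equiv.swap a x).cycleType
        = Multiset.card σ.cycleType + 1 := by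
      rw [hd.cycleType_mul, Multiset.card_add, card_cycleType_eq_one.mpr (isCycle_swap hax)]
    have := jc_card_cycleType_le σ
    omega
  · set c := σ.cycleOf a with hc
    have hamem : a ∈ σ.support := mem_support.mpr ha
    have hcmem : c ∈ σ.cycleFactorsFinset := cycleOf_mem_cycleFactorsFinset_iff.mpr hamem
    have hccyc : c.IsCycle := isCycle_cycleOf σ ha
    have hdisj : Disjoint (σ * c⁻¹) c := disjoint_mul_inv_of_mem_cycleFactorsFinset hcmem
    set d := σ * c⁻¹ with hdd
    have hsigma : σ = d * c := by rw [hdd, inv_mul_cancel_right]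
    have hac : a ∈ c.support := by
      rw [hc, mem_support_cycleOf_iff]
      exact ⟨Equiv.Perm.SameCycle.refl _ _, hamem⟩
    have hxc : x ∉ c.support := fun h => hxs (support_cycleOf_le σ a h)
    obtain ⟨hcyc', hsupp'⟩ := jc_merge hccyc hac hxc
    have hdx : d x = x := by
      have h1 : c⁻¹ x = x := by
        rw [Equiv.Perm.inv_eq_iff_eq]
        exact (notMem_support.mp hxc).symm
      rw [hdd, Equiv.Perm.mul_apply, h1, hx]
    have hdisj2 : Disjoint d (c * Equiv.swap a x) := by
      intro y
      by_cases hy : y ∈ (c * Equiv.swap a x).support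
      · rw [hsupp', Finset.mem_insert] at hy
        rcases hy with rfl | hy
        · exact Or.inl hdx
        · rcases hdisj y with h | h
          · exact Or.inl h
          · exact absurd h (mem_support.mp hy)
      · exact Or.inr (notMem_support.mp hy)
    have htau : σ * Equiv.swap a x = d * (c * Equiv.swap a x) := by
      rw [hsigma, mul_assoc]
    have hct : Multiset.card (σ * Equiv.swap a x).cycleType
        = Multiset.card d.cycleType + 1 := by
      rw [htau, hdisj2.cycleType_mul, Multiset.card_add, card_cycleType_eq_one.mpr hcyc']
    have hctσ : Multiset.card σ.cycleType = Multiset.card d.cycleType + 1 := by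
      conv_lhs => rw [hsigma]
      rw [hdisj.cycleType_mul, Multiset.card_add, card_cycleType_eq_one.mpr hccyc]
    have hcard : (σ * Equiv.swap a x).support.card
        = d.support.card + (c.support.card + 1) := by
      rw [htau, hdisj2.support_mul, hsupp',
        Finset.card_union_of_disjoint (hsupp' ▸ hdisj2.disjoint_support),
        Finset.card_insert_of_notMem hxc]
    have hcardσ : σ.support.card = d.support.card + c.support.card := by
      conv_lhs => rw [hsigma]
      rw [hdisj.support_mul, Finset.card_union_of_disjoint hdisj.disjoint_support]
    have h1 := jc_card_cycleType_le d
    have h2 := hccyc.two_le_card_support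
    omega

lemma jc_tc_eq_zero {σ : Perm α} :
    σ.support.card - Multiset.card σ.cycleType = 0 ↔ σ = 1 := by
  have h1 := jc_card_cycleType_le σ
  have h2 : 2 * Multiset.card σ.cycleType ≤ σ.support.card := by
    rw [← Equiv.Perm.sum_cycleType]
    have h : ∀ y ∈ σ.cycleType, 2 ≤ y := fun y hy => two_le_of_mem_cycleType hy
    simpa [mul_comm] using Multiset.card_nsmul_le_sum h
  constructor
  · intro h
    exact card_cycleType_eq_zero.mp (by omega)
  · rintro rfl; simp



lemma jc_filter_zero (n m : ℕ) :
    (Finset.univ.filter fun σ : Equiv.Perm (Fin n) =>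
      (∀ i : Fin n, m ≤ (i : ℕ) → σ i = i) ∧
      σ.support.card - Multiset.card σ.cycleType = 0) = {1} := by
  ext σ
  simp only [Finset.mem_filter, Finset.mem_univ, true_and, Finset.mem_singleton]
  constructor
  · rintro ⟨_, h2⟩
    exact jc_tc_eq_zero.mp h2
  · rintro rfl
    exact ⟨fun i _ => rfl, jc_tc_eq_zero.mpr rfl⟩

lemma jc_key (n : ℕ) : ∀ m, m ≤ n → ∀ k : ℕ,
    ∑ S ∈ (Finset.univ.filter fun i : Fin n => (i : ℕ) < m).powersetCard k,
      (((List.finRange n).take m).map fun i => if i ∈ S then jucysMurphy n i else 1).prod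
    = ∑ σ ∈ Finset.univ.filter (fun σ : Equiv.Perm (Fin n) =>
        (∀ i : Fin n, m ≤ (i : ℕ) → σ i = i) ∧
        σ.support.card - Multiset.card σ.cycleType = k),
      MonoidAlgebra.single σ (1 : ℚ) := by
  intro m
  induction m with
  | zero =>
    intro _ k
    have hfe : (Finset.univ.filter fun i : Fin n => (i : ℕ) < 0) = ∅ := by
      ext i; simp
    cases k with
    | zero =>
      rw [hfe, Finset.powersetCard_zero, Finset.sum_singleton, jc_filter_zero,
        Finset.sum_singleton]
      simp [MonoidAlgebra.one_def]
    | succ k' =>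
      rw [hfe, Finset.powersetCard_eq_empty.mpr (by simp), Finset.sum_empty]
      have hset : (Finset.univ.filter fun σ : Equiv.Perm (Fin n) =>
          (∀ i : Fin n, 0 ≤ (i : ℕ) → σ i = i) ∧
          σ.support.card - Multiset.card σ.cycleType = k' + 1) = ∅ := by
        apply Finset.eq_empty_iff_forall_notMem.mpr
        intro σ hσ
        rw [Finset.mem_filter] at hσ
        obtain ⟨-, h1, h2⟩ := hσ
        have hσ1 : σ = 1 := Equiv.ext fun i => h1 i (Nat.zero_le _)
        subst hσ1
        simp at h2
      rw [hset, Finset.sum_empty]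
  | succ m IH =>
    intro hm1 k
    have hm : m ≤ n := le_trans (Nat.le_succ m) hm1
    have hmn : m < n := hm1
    set x : Fin n := ⟨m, hmn⟩ with hxdef
    have hxval : (x : ℕ) = m := rfl
    have hA : (Finset.univ.filter fun i : Fin n => (i : ℕ) < m + 1)
        = insert x (Finset.univ.filter fun i : Fin n => (i : ℕ) < m) := by
      ext i
      simp only [Finset.mem_filter, Finset.mem_univ, true_and, Finset.mem_insert]
      constructor
      · intro h
        rcases eq_or_lt_of_le (Nat.lt_succ_iff.mp h) with h' | h'
        · exact Or.inl (Fin.ext h')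
        · exact Or.inr h'
      · rintro (rfl | h)
        · exact Nat.lt_succ_self m
        · exact lt_trans h (Nat.lt_succ_self m)
    have hxnot : x ∉ Finset.univ.filter (fun i : Fin n => (i : ℕ) < m) := by
      simp [hxval]
    have hlen : m < (List.finRange n).length := by simpa using hmn
    have hB : (List.finRange n).take (m + 1) = (List.finRange n).take m ++ [x] := by
      rw [List.take_succ, List.getElem?_eq_getElem hlen]
      simp [hxdef]
    have h0 : ∀ i ∈ (List.finRange n).take m, (i : ℕ) < m := by
      intro i hi
      rw [List.mem_iff_getElem] at hi
      obtain ⟨j, hj, rfl⟩ := hi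
      have hj' : j < m := by
        simpa using lt_of_lt_of_le hj (by simp [List.length_take])
      rw [List.getElem_take]
      simpa using hj'
    have hP : ∀ S T : Finset (Fin n), (∀ i : Fin n, (i : ℕ) < m → (i ∈ S ↔ i ∈ T)) →
        (((List.finRange n).take m).map fun i => if i ∈ S then jucysMurphy n i else 1).prod
        = (((List.finRange n).take m).map fun i => if i ∈ T then jucysMurphy n i else 1).prod := by
      intro S T h
      congr 1
      apply List.map_congr_left
      intro i hi
      exact if_congr (h i (h0 i hi)) rfl rfl
    have hsplit : ∀ S : Finset (Fin n),
        (((List.finRange n).take (m + 1)).map fun i => if i ∈ S then jucysMurphy n i else 1).prod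
        = (((List.finRange n).take m).map fun i => if i ∈ S then jucysMurphy n i else 1).prod
          * (if x ∈ S then jucysMurphy n x else 1) := by
      intro S
      rw [hB, List.map_append, List.prod_append]
      simp
    cases k with
    | zero =>
      rw [hA, Finset.powersetCard_zero, Finset.sum_singleton, hsplit,
        if_neg (Finset.notMem_empty x), mul_one, jc_filter_zero]
      have h1 := IH hm 0
      rw [Finset.powersetCard_zero, Finset.sum_singleton, jc_filter_zero] at h1
      exact h1
    | succ k' =>
      rw [hA, Finset.powersetCard_succ_insert hxnot]
      have hdisjU : Disjoint
          ((Finset.univ.filter fun i : Fin n => (i : ℕ) < m).powersetCard (k' + 1))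
          (((Finset.univ.filter fun i : Fin n => (i : ℕ) < m).powersetCard k').image
            (insert x)) := by
        rw [Finset.disjoint_left]
        intro S hS hS'
        obtain ⟨T, _, rfl⟩ := Finset.mem_image.mp hS'
        have := Finset.mem_powersetCard.mp hS
        exact hxnot (this.1 (Finset.mem_insert_self x T))
      rw [Finset.sum_union hdisjU]
      have e1 : ∑ S ∈ (Finset.univ.filter fun i : Fin n => (i : ℕ) < m).powersetCard (k' + 1),
          (((List.finRange n).take (m + 1)).map fun i =>
            if i ∈ S then jucysMurphy n i else 1).prod
          = ∑ σ ∈ Finset.univ.filter (fun σ : Equiv.Perm (Fin n) =>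
              (∀ i : Fin n, m ≤ (i : ℕ) → σ i = i) ∧
              σ.support.card - Multiset.card σ.cycleType = k' + 1),
            MonoidAlgebra.single σ (1 : ℚ) := by
        rw [← IH hm (k' + 1)]
        apply Finset.sum_congr rfl
        intro S hS
        have hxS : x ∉ S := fun hmem =>
          hxnot ((Finset.mem_powersetCard.mp hS).1 hmem)
        rw [hsplit, if_neg hxS, mul_one]
      have e2 : ∑ S ∈ ((Finset.univ.filter fun i : Fin n => (i : ℕ) < m).powersetCard k').image
            (insert x),
          (((List.finRange n).take (m + 1)).map fun i =>
            if i ∈ S then jucysMurphy n i else 1).prod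
          = (∑ σ ∈ Finset.univ.filter (fun σ : Equiv.Perm (Fin n) =>
              (∀ i : Fin n, m ≤ (i : ℕ) → σ i = i) ∧
              σ.support.card - Multiset.card σ.cycleType = k'),
            MonoidAlgebra.single σ (1 : ℚ)) * jucysMurphy n x := by
        have hinj : ∀ T1 ∈ (Finset.univ.filter fun i : Fin n => (i : ℕ) < m).powersetCard k',
            ∀ T2 ∈ (Finset.univ.filter fun i : Fin n => (i : ℕ) < m).powersetCard k',
            insert x T1 = insert x T2 → T1 = T2 := by
          intro T1 h1 T2 h2 he
          have hxT1 : x ∉ T1 := fun hmem =>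
            hxnot ((Finset.mem_powersetCard.mp h1).1 hmem)
          have hxT2 : x ∉ T2 := fun hmem =>
            hxnot ((Finset.mem_powersetCard.mp h2).1 hmem)
          rw [← Finset.erase_insert hxT1, ← Finset.erase_insert hxT2, he]
        rw [← IH hm k', Finset.sum_image hinj, Finset.sum_mul]
        apply Finset.sum_congr rfl
        intro T hT
        have hxT : x ∉ T := fun hmem =>
          hxnot ((Finset.mem_powersetCard.mp hT).1 hmem)
        rw [hsplit, if_pos (Finset.mem_insert_self x T)]
        congr 1
        apply hP
        intro i hi
        have hix : i ≠ x := fun h => by rw [h, hxval] at hi; exact lt_irrefl m hi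
        simp [Finset.mem_insert, hix]
      rw [e1, e2]
      have e3 : (∑ σ ∈ Finset.univ.filter (fun σ : Equiv.Perm (Fin n) =>
            (∀ i : Fin n, m ≤ (i : ℕ) → σ i = i) ∧
            σ.support.card - Multiset.card σ.cycleType = k'),
          MonoidAlgebra.single σ (1 : ℚ)) * jucysMurphy n x
          = ∑ p ∈ (Finset.univ.filter (fun σ : Equiv.Perm (Fin n) =>
              (∀ i : Fin n, m ≤ (i : ℕ) → σ i = i) ∧
              σ.support.card - Multiset.card σ.cycleType = k')) ×ˢ Finset.Iio x,
            MonoidAlgebra.single (p.1 * Equiv.swap p.2 x) (1 : ℚ) := by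
        rw [show jucysMurphy n x
            = ∑ i ∈ Finset.Iio x, MonoidAlgebra.single (Equiv.swap i x) (1 : ℚ) from rfl,
          Finset.sum_mul_sum, Finset.sum_product]
        simp [MonoidAlgebra.single_mul_single]
      rw [e3]
      rw [← Finset.sum_filter_add_sum_filter_not
        (Finset.univ.filter (fun σ : Equiv.Perm (Fin n) =>
          (∀ i : Fin n, m + 1 ≤ (i : ℕ) → σ i = i) ∧
          σ.support.card - Multiset.card σ.cycleType = k' + 1)) (fun σ => σ x = x)]
      congr 1
      · apply Finset.sum_congr _ (fun _ _ => rfl)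
        ext σ
        simp only [Finset.mem_filter, Finset.mem_univ, true_and]
        constructor
        · rintro ⟨h1, h2⟩
          exact ⟨⟨fun i hi => h1 i (le_trans (Nat.le_succ m) hi), h2⟩,
            h1 x (le_of_eq hxval.symm)⟩
        · rintro ⟨⟨h1, h2⟩, h3⟩
          refine ⟨fun i hi => ?_, h2⟩
          rcases eq_or_lt_of_le hi with h' | h'
          · have hix : i = x := Fin.ext h'.symm
            rw [hix]; exact h3
          · exact h1 i h'
      · apply Finset.sum_nbij' (i := fun p : Equiv.Perm (Fin n) × Fin n =>
            p.1 * Equiv.swap p.2 x)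
          (j := fun τ : Equiv.Perm (Fin n) => (τ * Equiv.swap (τ⁻¹ x) x, τ⁻¹ x))
        · -- hi : forward map lands in target
          rintro ⟨σ, a⟩ hp
          rw [Finset.mem_product] at hp
          obtain ⟨hσ, ha⟩ := hp
          rw [Finset.mem_filter] at hσ
          obtain ⟨-, h1, h2⟩ := hσ
          have haval : (a : ℕ) < m := by
            have := Finset.mem_Iio.mp ha
            simpa [Fin.lt_def, hxval] using this
          have hax : a ≠ x := fun h => by rw [h, hxval] at haval; omega
          have hσx : σ x = x := h1 x (le_of_eq hxval.symm)
          simp only [Finset.mem_filter, Finset.mem_univ, true_and]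
          refine ⟨⟨fun i hi => ?_, ?_⟩, ?_⟩
          · have hia : i ≠ a := fun h => by rw [h] at hi; omega
            have hix : i ≠ x := fun h => by rw [h, hxval] at hi; omega
            rw [Equiv.Perm.mul_apply, Equiv.swap_apply_of_ne_of_ne hia hix]
            exact h1 i (by omega)
          · rw [jc_tc_mul_swap hσx hax, h2]
          · intro hfix
            rw [Equiv.Perm.mul_apply, Equiv.swap_apply_right] at hfix
            exact hax (σ.injective (hfix.trans hσx.symm))
        · -- hj : backward map lands in source
          intro τ hτ
          rw [Finset.mem_filter, Finset.mem_filter] at hτ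
          obtain ⟨⟨-, h1, h2⟩, hτx⟩ := hτ
          have hτix : τ⁻¹ x ≠ x := fun h => hτx (by
            have : τ (τ⁻¹ x) = x := Equiv.apply_symm_apply τ x
            rwa [h] at this)
          have haval : ((τ⁻¹ x : Fin n) : ℕ) < m := by
            by_contra hcon
            push_neg at hcon
            rcases eq_or_lt_of_le hcon with h' | h'
            · exact hτix (Fin.ext (by rw [← h', hxval]))
            · have := h1 (τ⁻¹ x) (by omega)
              rw [show τ (τ⁻¹ x) = x from Equiv.apply_symm_apply τ x] at this
              exact hτix (Fin.ext (by rw [← this, hxval]))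
          have hax : τ⁻¹ x ≠ x := hτix
          have hσx : (τ * Equiv.swap (τ⁻¹ x) x) x = x := by
            rw [Equiv.Perm.mul_apply, Equiv.swap_apply_right, show τ (τ⁻¹ x) = x from Equiv.apply_symm_apply τ x]
          rw [Finset.mem_product, Finset.mem_filter]
          refine ⟨⟨Finset.mem_univ _, fun i hi => ?_, ?_⟩, ?_⟩
          · rcases eq_or_lt_of_le hi with h' | h'
            · have hix : i = x := Fin.ext (h' ▸ hxval).symm
              rw [hix]; exact hσx
            · have hia : i ≠ τ⁻¹ x := fun h => by rw [h] at h'; omega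
              have hix : i ≠ x := fun h => by rw [h, hxval] at h'; omega
              rw [Equiv.Perm.mul_apply, Equiv.swap_apply_of_ne_of_ne hia hix]
              exact h1 i (by omega)
          · have hτeq : (τ * Equiv.swap (τ⁻¹ x) x) * Equiv.swap (τ⁻¹ x) x = τ := by
              rw [mul_assoc, Equiv.swap_mul_self, mul_one]
            have := jc_tc_mul_swap hσx hax
            rw [hτeq] at this
            show (τ * Equiv.swap (τ⁻¹ x) x).support.card
              - Multiset.card (τ * Equiv.swap (τ⁻¹ x) x).cycleType = k'
            omega
          · rw [Finset.mem_Iio, Fin.lt_def, hxval]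
            exact haval
        · -- left inverse
          rintro ⟨σ, a⟩ hp
          rw [Finset.mem_product] at hp
          obtain ⟨hσ, ha⟩ := hp
          rw [Finset.mem_filter] at hσ
          obtain ⟨-, h1, -⟩ := hσ
          have haval : (a : ℕ) < m := by
            have := Finset.mem_Iio.mp ha
            simpa [Fin.lt_def, hxval] using this
          have hax : a ≠ x := fun h => by rw [h, hxval] at haval; omega
          have hσx : σ⁻¹ x = x := by
            rw [Equiv.Perm.inv_eq_iff_eq]
            exact (h1 x (le_of_eq hxval.symm)).symm
          have hinvx : (σ * Equiv.swap a x)⁻¹ x = a := by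
            rw [mul_inv_rev, Equiv.Perm.mul_apply, Equiv.swap_inv, hσx,
              Equiv.swap_apply_right]
          ext
          · simp only [hinvx]
            rw [mul_assoc, Equiv.swap_mul_self, mul_one]
          · simp only [hinvx]
        · -- right inverse
          intro τ hτ
          rw [mul_assoc, Equiv.swap_mul_self, mul_one]
        · rintro ⟨σ, a⟩ _
          rfl

end Aux

/-- Jucys correspondence: for `0 ≤ k ≤ n - 1`, the `k`-th elementary symmetric polynomial
in the Jucys–Murphy elements equals `Σ_{μ ⊢ n, ℓ(μ) = n - k} C_μ`, i.e. the sum of all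
permutations having exactly `n - k` cycles (fixed points included). -/
theorem jucys_correspondence (n k : ℕ) (hk : k ≤ n - 1) :
    evalJM n (MvPolynomial.esymm (Fin n) ℚ k) =
      ∑ σ ∈ Finset.univ.filter
          (fun σ : Equiv.Perm (Fin n) => (Equiv.Perm.partition σ).parts.card = n - k),
        MonoidAlgebra.single σ (1 : ℚ) := by
  classical
  -- Step 1: expand `evalJM` on `esymm`
  have hsum : evalJM n (MvPolynomial.esymm (Fin n) ℚ k)
      = ∑ S ∈ Finset.univ.powersetCard k,
          ((List.finRange n).map fun i =>
            jucysMurphy n i ^ ((∑ j ∈ S, Finsupp.single j 1 : Fin n →₀ ℕ) i)).prod := by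
    have h1 : ∀ p : MvPolynomial (Fin n) ℚ, evalJM n p
        = Finsupp.sum (AddMonoidAlgebra.coeff p) (fun d c =>
            c • ((List.finRange n).map fun i => jucysMurphy n i ^ d i).prod) := fun p => by rw [MvPolynomial.sum_def]; rfl
    rw [h1, MvPolynomial.esymm_eq_sum_monomial, AddMonoidAlgebra.coeff_sum, ← Finsupp.sum_finsetSum_index]
    · apply Finset.sum_congr rfl
      intro S _
      have h2 : (Finsupp.sum (AddMonoidAlgebra.coeff <| MvPolynomial.monomial (∑ j ∈ S, Finsupp.single j 1) (1 : ℚ))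
          (fun d c => c • ((List.finRange n).map fun i => jucysMurphy n i ^ d i).prod))
          = (Finsupp.single (∑ j ∈ S, Finsupp.single j 1 : Fin n →₀ ℕ) (1 : ℚ)).sum
            (fun d c => c • ((List.finRange n).map fun i => jucysMurphy n i ^ d i).prod) := rfl
      rw [h2, Finsupp.sum_single_index (by simp), one_smul]
    · intro d; simp
    · intro d c1 c2; rw [add_smul]
  rw [hsum]
  -- Step 2: turn powers into if-then-else factors
  have hpow : ∀ S : Finset (Fin n),
      ((List.finRange n).map fun i =>
        jucysMurphy n i ^ ((∑ j ∈ S, Finsupp.single j 1 : Fin n →₀ ℕ) i)).prod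
      = ((List.finRange n).map fun i => if i ∈ S then jucysMurphy n i else 1).prod := by
    intro S
    congr 1
    apply List.map_congr_left
    intro i _
    have happ : ((∑ j ∈ S, Finsupp.single j 1 : Fin n →₀ ℕ) i) = if i ∈ S then 1 else 0 := by
      rw [Finsupp.finset_sum_apply]
      simp [Finsupp.single_apply]
    rw [happ]
    by_cases h : i ∈ S <;> simp [h]
  rw [Finset.sum_congr rfl (fun S _ => hpow S)]
  -- Step 3: apply the key lemma at m = n
  have hkey := jc_key n n le_rfl k
  have hfil : (Finset.univ.filter fun i : Fin n => (i : ℕ) < n) = Finset.univ := by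
    ext i; simp [i.isLt]
  have htake : (List.finRange n).take n = List.finRange n :=
    List.take_of_length_le (by simp)
  simp only [hfil, htake] at hkey
  rw [hkey]
  -- Step 4: translate the counting condition
  apply Finset.sum_congr _ (fun _ _ => rfl)
  apply Finset.filter_congr
  intro σ _
  have h1 := jc_card_cycleType_le σ
  have h2 : σ.support.card ≤ n := by
    simpa using Finset.card_le_univ σ.support
  have hparts : σ.partition.parts.card
      = Multiset.card σ.cycleType + (n - σ.support.card) := by
    rw [Equiv.Perm.parts_partition]
    simp
  have hk' : k ≤ n := le_trans hk (Nat.sub_le n 1)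
  constructor
  · rintro ⟨-, ht⟩
    simp only [hparts]
    omega
  · intro hp
    refine ⟨fun i hi => absurd i.isLt (not_lt.mpr hi), ?_⟩
    rw [hparts] at hp
    omega
end
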